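/- For all positive integers i and b with 2 ≤ b ≤ 4i + 4, there exists a rational convex polygon P ⊂ ℝ² of denominator 4 that is pseudointegral, has exactly i lattice points in its interior, and has exactly b lattice points on its boundary. In fact, one may take P = conv{(i,0), (0,1/4), (−1,−1/2), (−1,−1), (b−3,−1), (i + (3/4)(b−4), −3/4)}. -/

import Mathlib

open Set Pointwise

/-- The set of lattice points of the plane. -/
def latticePts : Set (ℝ × ℝ) := {p | ∃ m n : ℤ, p = ((m : ℝ), (n : ℝ))}

/-- The coercion of a rational point of the plane to a real point. -/
def qpt (v : ℚ × ℚ) : ℝ × ℝ := ((v.1 : ℝ), (v.2 : ℝ))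

/-- The Ehrhart function of a set `P ⊆ ℝ²`:  `t ↦ #(tP ∩ ℤ²)`. -/
noncomputable def ehr (P : Set (ℝ × ℝ)) (t : ℕ) : ℕ :=
  (((t : ℝ) • P) ∩ latticePts).ncard

/-- A set `P ⊆ ℝ²` is pseudointegral (a PIP) if its Ehrhart function agrees with
a polynomial at all positive integers. -/
def IsPIP (P : Set (ℝ × ℝ)) : Prop :=
  ∃ c : Polynomial ℚ, ∀ t : ℕ, 0 < t → (ehr P t : ℚ) = c.eval (t : ℚ)

/-- A rational triangle: the convex hull of three non-collinear rational points. -/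
def IsRatTriangle (T : Set (ℝ × ℝ)) : Prop :=
  ∃ p q r : ℚ × ℚ, ¬ Collinear ℝ ({qpt p, qpt q, qpt r} : Set (ℝ × ℝ)) ∧
    T = convexHull ℝ {qpt p, qpt q, qpt r}

/-- A rational convex polygon: the convex hull of a finite set of rational
points, with nonempty interior in ℝ². -/
def IsRatPolygon (P : Set (ℝ × ℝ)) : Prop :=
  ∃ V : Finset (ℚ × ℚ), P = convexHull ℝ (qpt '' (V : Set (ℚ × ℚ))) ∧
    (interior P).Nonempty

/-- `P` has denominator `d`: `d` is the least positive integer `k` such that the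
vertices (extreme points) of `kP` are all lattice points. -/
def HasDenom (P : Set (ℝ × ℝ)) (d : ℕ) : Prop :=
  IsLeast {k : ℕ | 0 < k ∧ Set.extremePoints ℝ ((k : ℝ) • P) ⊆ latticePts} d


namespace Stmt11


/-- A closed halfplane. -/
def HP (a c d : ℝ) : Set (ℝ × ℝ) := {p | a * p.1 + c * p.2 ≤ d}

lemma convex_HP (a c d : ℝ) : Convex ℝ (HP a c d) := by
  intro p hp q hq u v hu hv huv
  simp only [HP, mem_setOf_eq] at *
  have h1 : u * (a * p.1 + c * p.2) ≤ u * d := mul_le_mul_of_nonneg_left hp hu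
  have h2 : v * (a * q.1 + c * q.2) ≤ v * d := mul_le_mul_of_nonneg_left hq hv
  have : u * d + v * d = d := by rw [← add_mul, huv, one_mul]
  simp only [Prod.smul_fst, Prod.smul_snd, Prod.fst_add, Prod.snd_add, smul_eq_mul]
  nlinarith

lemma interior_HP (a c d : ℝ) (h : a ≠ 0 ∨ c ≠ 0) :
    interior (HP a c d) = {p | a * p.1 + c * p.2 < d} := by
  have hpos : 0 < a ^ 2 + c ^ 2 := by
    rcases h with h | h <;> positivity
  apply Subset.antisymm
  · intro p hp
    rcases Metric.isOpen_iff.1 isOpen_interior p hp with ⟨ε, hε, hball⟩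
    have hsub : Metric.ball p ε ⊆ HP a c d := hball.trans interior_subset
    set δ : ℝ := ε / (2 * (|a| + |c| + 1)) with hδ
    have hδpos : 0 < δ := by positivity
    have hq : (p.1 + δ * a, p.2 + δ * c) ∈ Metric.ball p ε := by
      rw [Metric.mem_ball, Prod.dist_eq]
      have ha' : dist (p.1 + δ * a) p.1 = δ * |a| := by
        rw [Real.dist_eq]
        have : p.1 + δ * a - p.1 = δ * a := by ring
        rw [this, abs_mul, abs_of_pos hδpos]
      have hc' : dist (p.2 + δ * c) p.2 = δ * |c| := by
        rw [Real.dist_eq]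
        have : p.2 + δ * c - p.2 = δ * c := by ring
        rw [this, abs_mul, abs_of_pos hδpos]
      rw [ha', hc']
      have h1 : δ * |a| < ε := by
        rw [hδ]; rw [div_mul_eq_mul_div, div_lt_iff₀ (by positivity)]
        have := abs_nonneg a; have := abs_nonneg c
        nlinarith
      have h2 : δ * |c| < ε := by
        rw [hδ]; rw [div_mul_eq_mul_div, div_lt_iff₀ (by positivity)]
        have := abs_nonneg a; have := abs_nonneg c
        nlinarith
      exact max_lt h1 h2
    have := hsub hq
    simp only [HP, mem_setOf_eq] at this ⊢
    nlinarith
  · apply interior_maximal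
    · intro p hp
      exact le_of_lt (show a * p.1 + c * p.2 < d from hp)
    · exact isOpen_lt (by continuity) continuous_const

/-- The H-description of the (scaled) polygon. -/
def Hs (I B T : ℝ) : Set (ℝ × ℝ) :=
  HP 0 (-1) T ∩ (HP (-1) 0 T ∩ (HP (-3) 4 T ∩ (HP 1 (4*I) (I*T) ∩
    (HP 1 (B-4) (I*T) ∩ HP 1 (B-4*I) ((4*I-3)*T)))))

lemma mem_Hs {I B T : ℝ} {p : ℝ × ℝ} : p ∈ Hs I B T ↔
    (-T ≤ p.2 ∧ -T ≤ p.1 ∧ -3*p.1+4*p.2 ≤ T ∧ p.1 + 4*I*p.2 ≤ I*T ∧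
      p.1+(B-4)*p.2 ≤ I*T ∧ p.1 + (B-4*I)*p.2 ≤ (4*I-3)*T) := by
  simp only [Hs, HP, mem_inter_iff, mem_setOf_eq]
  constructor
  · rintro ⟨h1, h2, h3, h4, h5, h6⟩
    refine ⟨by linarith, by linarith, by linarith, by linarith, by linarith, by linarith⟩
  · rintro ⟨h1, h2, h3, h4, h5, h6⟩
    refine ⟨by linarith, by linarith, by linarith, by linarith, by linarith, by linarith⟩

lemma convex_Hs (I B T : ℝ) : Convex ℝ (Hs I B T) :=
  ((convex_HP _ _ _).inter ((convex_HP _ _ _).inter ((convex_HP _ _ _).inter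
    ((convex_HP _ _ _).inter ((convex_HP _ _ _).inter (convex_HP _ _ _))))))

/-- The vertex set. -/
def Vset (I B : ℝ) : Set (ℝ × ℝ) :=
  {(I, 0), (0, 1/4), (-1, -(1/2)), (-1, -1), (B - 3, -1), (I + (3/4) * (B - 4), -(3/4))}

lemma combo_mem {s : Set (ℝ × ℝ)} {x y : ℝ × ℝ} (hx : x ∈ s) (hy : y ∈ s) {a : ℝ}
    (h0 : 0 ≤ a) (h1 : a ≤ 1) : a • x + (1-a) • y ∈ convexHull ℝ s :=
  (convex_convexHull ℝ s) (subset_convexHull ℝ s hx) (subset_convexHull ℝ s hy) h0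
    (by linarith) (by ring)

lemma between_mem {s : Set (ℝ × ℝ)} (hc : Convex ℝ s) {l r p : ℝ × ℝ}
    (hl : l ∈ s) (hr : r ∈ s) (h2 : l.2 = p.2) (h2' : r.2 = p.2)
    (hx1 : l.1 ≤ p.1) (hx2 : p.1 ≤ r.1) : p ∈ s := by
  rcases eq_or_lt_of_le (hx1.trans hx2) with heq | hlt
  · have hpl : p = l := by
      have h1 : l.1 = p.1 := le_antisymm hx1 (by rw [heq]; exact hx2)
      exact (Prod.ext h1 h2).symm
    rw [hpl]; exact hl
  · set u : ℝ := (p.1 - l.1) / (r.1 - l.1) with hu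
    have hden : 0 < r.1 - l.1 := by linarith
    have hu0 : 0 ≤ u := div_nonneg (by linarith) (by linarith)
    have hu1 : u ≤ 1 := by rw [hu, div_le_one hden]; linarith
    have := hc hl hr (by linarith : (0:ℝ) ≤ 1 - u) hu0 (by ring)
    convert this using 1
    have h1 : p.1 = (1-u) * l.1 + u * r.1 := by
      rw [hu]; field_simp; ring
    have h2'' : p.2 = (1-u) * l.2 + u * r.2 := by rw [h2, h2']; ring
    have : ((1 - u) • l + u • r : ℝ × ℝ) = ((1-u) * l.1 + u * r.1, (1-u) * l.2 + u * r.2) := by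
      simp [Prod.ext_iff, Prod.smul_fst, Prod.smul_snd]
    rw [this]
    exact Prod.ext h1 h2''

lemma vertices_mem_Hs (I B : ℝ) (hI : 1 ≤ I) (hB2 : 2 ≤ B) (hB : B ≤ 4*I+4) :
    Vset I B ⊆ Hs I B 1 := by
  intro p hp
  rw [mem_Hs]
  simp only [Vset, mem_insert_iff, mem_singleton_iff] at hp
  rcases hp with h|h|h|h|h|h <;> subst h <;> norm_num <;> constructorm* _ ∧ _ <;> nlinarith

lemma combo_mk (a x1 y1 x2 y2 : ℝ) :
    a • ((x1, y1) : ℝ × ℝ) + (1-a) • ((x2, y2) : ℝ × ℝ)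
      = (a*x1 + (1-a)*x2, a*y1 + (1-a)*y2) := by
  simp [Prod.smul_mk, Prod.mk_add_mk, smul_eq_mul]

lemma hull_eq (I B : ℝ) (hI : 1 ≤ I) (hB2 : 2 ≤ B) (hB : B ≤ 4*I+4) :
    convexHull ℝ (Vset I B) = Hs I B 1 := by
  apply Subset.antisymm
  · exact convexHull_min (vertices_mem_Hs I B hI hB2 hB) (convex_Hs I B 1)
  · intro p hp
    rw [mem_Hs] at hp
    obtain ⟨c1, c2, c3, c4, c5, c6⟩ := hp
    have hA : ((I, 0) : ℝ×ℝ) ∈ Vset I B := by simp [Vset]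
    have hBv : ((0, 1/4) : ℝ×ℝ) ∈ Vset I B := by simp [Vset]
    have hC : ((-1, -(1/2)) : ℝ×ℝ) ∈ Vset I B := by simp [Vset]
    have hD : ((-1, -1) : ℝ×ℝ) ∈ Vset I B := by simp [Vset]
    have hE : ((B - 3, -1) : ℝ×ℝ) ∈ Vset I B := by simp [Vset]
    have hF : ((I + (3/4) * (B - 4), -(3/4)) : ℝ×ℝ) ∈ Vset I B := by simp [Vset]
    have hy4 : p.2 ≤ 1/4 := by nlinarith
    rcases le_or_gt 0 p.2 with hy | hy
    · have h1 := combo_mem hBv hC (a := (2/3)*(2*p.2+1)) (by linarith) (by linarith)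
      have h2 := combo_mem hBv hA (a := 4*p.2) (by linarith) (by linarith)
      rw [combo_mk] at h1 h2
      exact between_mem (convex_convexHull ℝ _) h1 h2 (by dsimp only; ring)
        (by dsimp only; ring) (by dsimp only; nlinarith) (by dsimp only; nlinarith)
    · rcases le_or_gt (-(1/2)) p.2 with hy2 | hy2
      · have h1 := combo_mem hBv hC (a := (2/3)*(2*p.2+1)) (by linarith) (by linarith)
        have h2 := combo_mem hA hF (a := (4*p.2+3)/3) (by linarith) (by linarith)
        rw [combo_mk] at h1 h2
        exact between_mem (convex_convexHull ℝ _) h1 h2 (by dsimp only; ring)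
          (by dsimp only; ring) (by dsimp only; nlinarith) (by dsimp only; nlinarith)
      · rcases le_or_gt (-(3/4)) p.2 with hy3 | hy3
        · have h1 := combo_mem hC hD (a := 2*p.2+2) (by linarith) (by linarith)
          have h2 := combo_mem hA hF (a := (4*p.2+3)/3) (by linarith) (by linarith)
          rw [combo_mk] at h1 h2
          exact between_mem (convex_convexHull ℝ _) h1 h2 (by dsimp only; ring)
            (by dsimp only; ring) (by dsimp only; nlinarith) (by dsimp only; nlinarith)
        · have h1 := combo_mem hC hD (a := 2*p.2+2) (by linarith) (by linarith)
          have h2 := combo_mem hE hF (a := -(4*p.2+3)) (by linarith) (by linarith)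
          rw [combo_mk] at h1 h2
          exact between_mem (convex_convexHull ℝ _) h1 h2 (by dsimp only; ring)
            (by dsimp only; ring) (by dsimp only; nlinarith) (by dsimp only; nlinarith)

lemma smul_Hs (I B : ℝ) {T : ℝ} (hT : 0 < T) : T • Hs I B 1 = Hs I B T := by
  ext p
  constructor
  · rintro ⟨q, hq, rfl⟩
    rw [mem_Hs] at hq ⊢
    obtain ⟨c1, c2, c3, c4, c5, c6⟩ := hq
    simp only [Prod.smul_fst, Prod.smul_snd, smul_eq_mul]
    refine ⟨by nlinarith, by nlinarith, by nlinarith, ?_, ?_, ?_⟩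
    · calc T * q.1 + 4*I*(T*q.2) = T * (q.1 + 4*I*q.2) := by ring
        _ ≤ T * (I*1) := by nlinarith
        _ = I * T := by ring
    · calc T * q.1 + (B-4)*(T*q.2) = T * (q.1 + (B-4)*q.2) := by ring
        _ ≤ T * (I*1) := by nlinarith
        _ = I * T := by ring
    · calc T * q.1 + (B-4*I)*(T*q.2) = T * (q.1 + (B-4*I)*q.2) := by ring
        _ ≤ T * ((4*I-3)*1) := by nlinarith
        _ = (4*I-3) * T := by ring
  · intro hp
    rw [mem_Hs] at hp
    obtain ⟨c1, c2, c3, c4, c5, c6⟩ := hp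
    refine ⟨T⁻¹ • p, ?_, smul_inv_smul₀ (ne_of_gt hT) p⟩
    rw [mem_Hs]
    simp only [Prod.smul_fst, Prod.smul_snd, smul_eq_mul]
    have hTi : 0 < T⁻¹ := inv_pos.2 hT
    have hc : T⁻¹ * T = 1 := inv_mul_cancel₀ (ne_of_gt hT)
    refine ⟨?_, ?_, ?_, ?_, ?_, ?_⟩
    · nlinarith [mul_le_mul_of_nonneg_left c1 hTi.le]
    · nlinarith [mul_le_mul_of_nonneg_left c2 hTi.le]
    · nlinarith [mul_le_mul_of_nonneg_left c3 hTi.le]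
    · calc T⁻¹ * p.1 + 4*I*(T⁻¹*p.2) = T⁻¹ * (p.1 + 4*I*p.2) := by ring
        _ ≤ T⁻¹ * (I*T) := by nlinarith
        _ = I * 1 := by rw [mul_comm I T, ← mul_assoc, hc, one_mul, mul_one]
    · calc T⁻¹ * p.1 + (B-4)*(T⁻¹*p.2) = T⁻¹ * (p.1 + (B-4)*p.2) := by ring
        _ ≤ T⁻¹ * (I*T) := by nlinarith
        _ = I * 1 := by rw [mul_comm I T, ← mul_assoc, hc, one_mul, mul_one]
    · calc T⁻¹ * p.1 + (B-4*I)*(T⁻¹*p.2) = T⁻¹ * (p.1 + (B-4*I)*p.2) := by ring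
        _ ≤ T⁻¹ * ((4*I-3)*T) := by nlinarith
        _ = (4*I-3) * 1 := by rw [mul_comm (4*I-3) T, ← mul_assoc, hc, one_mul, mul_one]

lemma interior_Hs (I B T : ℝ) :
    interior (Hs I B T) = {p : ℝ × ℝ | -T < p.2 ∧ -T < p.1 ∧ -3*p.1+4*p.2 < T ∧
      p.1 + 4*I*p.2 < I*T ∧ p.1+(B-4)*p.2 < I*T ∧ p.1 + (B-4*I)*p.2 < (4*I-3)*T} := by
  have h1 : interior (Hs I B T) = {p : ℝ × ℝ | 0*p.1 + (-1)*p.2 < T} ∩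
      ({p : ℝ × ℝ | (-1)*p.1 + 0*p.2 < T} ∩ ({p : ℝ × ℝ | (-3)*p.1 + 4*p.2 < T} ∩
      ({p : ℝ × ℝ | 1*p.1 + (4*I)*p.2 < I*T} ∩ ({p : ℝ × ℝ | 1*p.1 + (B-4)*p.2 < I*T} ∩
        {p : ℝ × ℝ | 1*p.1 + (B-4*I)*p.2 < (4*I-3)*T})))) := by
    rw [Hs, interior_inter, interior_inter, interior_inter, interior_inter, interior_inter,
      interior_HP _ _ _ (Or.inr (by norm_num)), interior_HP _ _ _ (Or.inl (by norm_num)),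
      interior_HP _ _ _ (Or.inl (by norm_num)), interior_HP _ _ _ (Or.inl (by norm_num)),
      interior_HP _ _ _ (Or.inl (by norm_num)), interior_HP _ _ _ (Or.inl (by norm_num))]
  rw [h1]
  ext p
  simp only [mem_inter_iff, mem_setOf_eq]
  constructor
  · rintro ⟨a1, a2, a3, a4, a5, a6⟩
    exact ⟨by linarith, by linarith, by linarith, by linarith, by linarith, by linarith⟩
  · rintro ⟨a1, a2, a3, a4, a5, a6⟩
    exact ⟨by linarith, by linarith, by linarith, by linarith, by linarith, by linarith⟩

lemma mem_Hs_pair {I B T x y : ℝ} : ((x, y) : ℝ × ℝ) ∈ Hs I B T ↔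
    (-T ≤ y ∧ -T ≤ x ∧ -3*x+4*y ≤ T ∧ x + 4*I*y ≤ I*T ∧
      x+(B-4)*y ≤ I*T ∧ x + (B-4*I)*y ≤ (4*I-3)*T) := by
  rw [mem_Hs]

lemma mem_interior_Hs_pair {I B T x y : ℝ} : ((x, y) : ℝ × ℝ) ∈ interior (Hs I B T) ↔
    (-T < y ∧ -T < x ∧ -3*x+4*y < T ∧ x + 4*I*y < I*T ∧
      x+(B-4)*y < I*T ∧ x + (B-4*I)*y < (4*I-3)*T) := by
  rw [interior_Hs]
  exact Iff.rfl

def Lt (t n : ℤ) : ℤ := max (-t) (-((t - 4*n)/3))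

def Rt (i b t n : ℤ) : ℤ :=
  min (i*t - 4*i*n) (min (i*t - (b-4)*n) ((4*i-3)*t - (b-4*i)*n))

lemma gauss (K : ℕ) : 2 * ∑ k ∈ Finset.range K, (k : ℤ) = K * (K - 1) := by
  induction K with
  | zero => simp
  | succ n ih =>
      rw [Finset.sum_range_succ, mul_add]
      push_cast
      push_cast at ih
      linarith [ih]

lemma sum_affine (c0 c1 : ℤ) (K : ℕ) :
    2 * ∑ k ∈ Finset.range K, (c0 + c1*(k:ℤ)) = 2*(K:ℤ)*c0 + c1*((K:ℤ)*((K:ℤ)-1)) := by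
  rw [Finset.sum_add_distrib, Finset.sum_const, ← Finset.mul_sum, nsmul_eq_mul, Finset.card_range]
  linear_combination c1 * gauss K

lemma phi_block (c0 : ℤ) (L : ℕ) :
    ∑ k ∈ Finset.range (3*L), ((c0 + 4*(k:ℤ))/3)
      = 6*(L:ℤ)*((L:ℤ)-1) + (c0/3 + (c0+4)/3 + (c0+8)/3)*(L:ℤ) := by
  induction L with
  | zero => simp
  | succ n ih =>
      have h3 : 3*(n+1) = (3*n) + 1 + 1 + 1 := by ring
      rw [h3, Finset.sum_range_succ, Finset.sum_range_succ, Finset.sum_range_succ, ih]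
      have key : (c0 + 4*(3*(n:ℤ)))/3 + (c0 + 4*(3*(n:ℤ)+1))/3
          + (c0 + 4*(3*(n:ℤ)+2))/3
          = 12*(n:ℤ) + (c0/3 + (c0+4)/3 + (c0+8)/3) := by
        omega
      push_cast
      push_cast at key
      linarith [key]

section cases

variable {i b t n : ℤ}

lemma caseA (hi : 1 ≤ i) (hb2 : 2 ≤ b) (hb : b ≤ 4*i+4) (ht : 1 ≤ t)
    (hn0 : 0 ≤ n) (hnq : n ≤ t/4) :
    Lt t n = -((t - 4*n)/3) ∧ Rt i b t n = i*t - 4*i*n ∧ Lt t n ≤ Rt i b t n := by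
  have h4n : 4*n ≤ t := by omega
  have hL : Lt t n = -((t - 4*n)/3) := max_eq_right (by omega)
  have h1 : i*t - 4*i*n ≤ i*t - (b-4)*n := by
    nlinarith [mul_nonneg (by linarith : (0:ℤ) ≤ 4*i+4-b) hn0]
  have h2 : i*t - 4*i*n ≤ (4*i-3)*t - (b-4*i)*n := by
    nlinarith [mul_nonneg (by linarith : (0:ℤ) ≤ i-1) (by linarith : (0:ℤ) ≤ t),
      mul_nonneg (by linarith : (0:ℤ) ≤ 8*i-b) hn0]
  have hR : Rt i b t n = i*t - 4*i*n := min_eq_left (le_min h1 h2)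
  refine ⟨hL, hR, ?_⟩
  rw [hL, hR]
  nlinarith [mul_nonneg (by linarith : (0:ℤ) ≤ i) (by linarith : (0:ℤ) ≤ t - 4*n),
    Int.ediv_nonneg (by linarith : (0:ℤ) ≤ t-4*n) (by norm_num : (0:ℤ) ≤ 3)]

lemma caseB (hi : 1 ≤ i) (hb2 : 2 ≤ b) (hb : b ≤ 4*i+4) (ht : 1 ≤ t)
    (hn1 : -(t/2) ≤ n) (hn2 : n ≤ -1) :
    Lt t n = -((t - 4*n)/3) ∧ Rt i b t n = i*t - (b-4)*n ∧ Lt t n ≤ Rt i b t n := by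
  have hL : Lt t n = -((t - 4*n)/3) := max_eq_right (by omega)
  have h34 : 0 ≤ 3*t + 4*n := by omega
  have h1 : i*t - (b-4)*n ≤ i*t - 4*i*n := by
    nlinarith [mul_nonneg (by linarith : (0:ℤ) ≤ 4*i+4-b) (by linarith : (0:ℤ) ≤ -n)]
  have h2 : i*t - (b-4)*n ≤ (4*i-3)*t - (b-4*i)*n := by
    nlinarith [mul_nonneg (by linarith : (0:ℤ) ≤ i-1) h34]
  have hR : Rt i b t n = i*t - (b-4)*n := by
    rw [Rt, min_eq_left h2, min_eq_right h1]
  refine ⟨hL, hR, ?_⟩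
  rw [hL, hR]
  have hRpos : 0 ≤ i*t - (b-4)*n := by
    nlinarith [mul_nonneg (by linarith : (0:ℤ) ≤ b-2) (by linarith : (0:ℤ) ≤ -n),
      mul_nonneg (by linarith : (0:ℤ) ≤ i-1) (by linarith : (0:ℤ) ≤ t),
      (by omega : (0:ℤ) ≤ t + 2*n)]
  have : 0 ≤ (t - 4*n)/3 := Int.ediv_nonneg (by linarith) (by norm_num)
  omega

lemma caseC (hi : 1 ≤ i) (hb2 : 2 ≤ b) (hb : b ≤ 4*i+4) (ht : 1 ≤ t)
    (hn1 : -((3*t)/4) ≤ n) (hn2 : n ≤ -(t/2) - 1) :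
    Lt t n = -t ∧ Rt i b t n = i*t - (b-4)*n ∧ Lt t n ≤ Rt i b t n := by
  have hL : Lt t n = -t := max_eq_left (by omega)
  have h34 : 0 ≤ 3*t + 4*n := by omega
  have h1 : i*t - (b-4)*n ≤ i*t - 4*i*n := by
    nlinarith [mul_nonneg (by linarith : (0:ℤ) ≤ 4*i+4-b) (by omega : (0:ℤ) ≤ -n)]
  have h2 : i*t - (b-4)*n ≤ (4*i-3)*t - (b-4*i)*n := by
    nlinarith [mul_nonneg (by linarith : (0:ℤ) ≤ i-1) h34]
  have hR : Rt i b t n = i*t - (b-4)*n := by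
    rw [Rt, min_eq_left h2, min_eq_right h1]
  refine ⟨hL, hR, ?_⟩
  rw [hL, hR]
  nlinarith [mul_nonneg (by linarith : (0:ℤ) ≤ b-2) (by omega : (0:ℤ) ≤ -n),
    mul_nonneg (by linarith : (0:ℤ) ≤ i-1) (by linarith : (0:ℤ) ≤ t), h34]

lemma caseD (hi : 1 ≤ i) (hb2 : 2 ≤ b) (hb : b ≤ 4*i+4) (ht : 1 ≤ t)
    (hn1 : -t ≤ n) (hn2 : n ≤ -((3*t)/4) - 1) :
    Lt t n = -t ∧ Rt i b t n = (4*i-3)*t - (b-4*i)*n ∧ Lt t n ≤ Rt i b t n := by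
  have hL : Lt t n = -t := max_eq_left (by omega)
  have h34 : 3*t + 4*n ≤ 0 := by omega
  have h1 : (4*i-3)*t - (b-4*i)*n ≤ i*t - 4*i*n := by
    nlinarith [mul_nonneg (by linarith : (0:ℤ) ≤ 8*i-b) (by omega : (0:ℤ) ≤ -4*n - 3*t),
      mul_nonneg (by linarith : (0:ℤ) ≤ 4*i+4-b) (by linarith : (0:ℤ) ≤ t),
      mul_nonneg (by linarith : (0:ℤ) ≤ i-1) (by linarith : (0:ℤ) ≤ t)]
  have h2 : (4*i-3)*t - (b-4*i)*n ≤ i*t - (b-4)*n := by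
    nlinarith [mul_nonneg (by linarith : (0:ℤ) ≤ i-1) (by linarith : (0:ℤ) ≤ -(3*t+4*n))]
  have hR : Rt i b t n = (4*i-3)*t - (b-4*i)*n := by
    rw [Rt, min_eq_right h2, min_eq_right h1]
  refine ⟨hL, hR, ?_⟩
  rw [hL, hR]
  rcases le_or_gt b (4*i) with hcase | hcase
  · nlinarith [mul_nonneg (by linarith : (0:ℤ) ≤ 4*i-b) (by linarith : (0:ℤ) ≤ -n),
      mul_nonneg (by linarith : (0:ℤ) ≤ i-1) (by linarith : (0:ℤ) ≤ t)]
  · have h4u : 4*(n+t) ≤ t - 1 := by omega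
    nlinarith [mul_nonneg (by linarith : (0:ℤ) ≤ b-4*i) (by linarith : (0:ℤ) ≤ t - 1 - 4*(n+t)),
      mul_nonneg (by linarith : (0:ℤ) ≤ b-2) (by linarith : (0:ℤ) ≤ t)]

end cases

set_option maxHeartbeats 2000000 in

lemma count_main (i b t : ℤ) (hi : 1 ≤ i) (hb2 : 2 ≤ b) (hb : b ≤ 4*i+4) (ht : 1 ≤ t) :
    2 * ∑ j ∈ Finset.range ((t/4 + t + 1).toNat),
        (Rt i b t (t/4 - (j:ℤ)) - Lt t (t/4 - (j:ℤ)) + 1)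
      = 2*i*t^2 + (b-2)*(t^2+t) + 2*t + 2 := by
  set q := t/4 with hqdef
  set h2 := t/2 with h2def
  set h3 := (3*t)/4 with h3def
  set a1 := (q+1).toNat with ha1def
  set a2 := h2.toNat with ha2def
  set a3 := (h3 - h2).toNat with ha3def
  set a4 := (t - h3).toNat with ha4def
  have hsplit : (q + t + 1).toNat = a1 + (a2 + (a3 + a4)) := by omega
  have eA : (∑ j ∈ Finset.range a1, (Rt i b t (q - (j:ℤ)) - Lt t (q - (j:ℤ)) + 1))
      = ∑ j ∈ Finset.range a1, ((i*t - 4*i*q + 1 + 4*i*(j:ℤ)) + (t%4 + 4*(j:ℤ))/3) := by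
    refine Finset.sum_congr rfl (fun j hj => ?_)
    rw [Finset.mem_range] at hj
    obtain ⟨hLe, hRe, -⟩ := caseA (n := q - (j:ℤ)) hi hb2 hb ht (by omega) (by omega)
    rw [hRe, hLe]
    have h1 : (t - 4*(q - (j:ℤ)))/3 = (t%4 + 4*(j:ℤ))/3 := by omega
    rw [h1]; ring
  have eB : (∑ x ∈ Finset.range a2,
        (Rt i b t (q - ((a1+x : ℕ):ℤ)) - Lt t (q - ((a1+x:ℕ):ℤ)) + 1))
      = ∑ x ∈ Finset.range a2, ((i*t + b - 3 + (b-4)*(x:ℤ)) + (t%4 + 4*((a1+x:ℕ):ℤ))/3) := by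
    refine Finset.sum_congr rfl (fun x hx => ?_)
    rw [Finset.mem_range] at hx
    have harg : q - ((a1+x:ℕ):ℤ) = -1 - (x:ℤ) := by push_cast; omega
    rw [harg]
    obtain ⟨hLe, hRe, -⟩ := caseB (n := -1 - (x:ℤ)) hi hb2 hb ht (by omega) (by omega)
    rw [hRe, hLe]
    have h1 : (t - 4*(-1 - (x:ℤ)))/3 = (t%4 + 4*((a1+x:ℕ):ℤ))/3 := by push_cast; omega
    rw [h1]; ring
  have eC : (∑ x ∈ Finset.range a3,
        (Rt i b t (q - ((a1+(a2+x) : ℕ):ℤ)) - Lt t (q - ((a1+(a2+x):ℕ):ℤ)) + 1))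
      = ∑ x ∈ Finset.range a3, (i*t + t + 1 + (b-4)*(h2+1) + (b-4)*(x:ℤ)) := by
    refine Finset.sum_congr rfl (fun x hx => ?_)
    rw [Finset.mem_range] at hx
    have harg : q - ((a1+(a2+x):ℕ):ℤ) = -1 - h2 - (x:ℤ) := by push_cast; omega
    rw [harg]
    obtain ⟨hLe, hRe, -⟩ := caseC (n := -1 - h2 - (x:ℤ)) hi hb2 hb ht (by omega) (by omega)
    rw [hRe, hLe]; ring
  have eD : (∑ x ∈ Finset.range a4,
        (Rt i b t (q - ((a1+(a2+(a3+x)) : ℕ):ℤ)) - Lt t (q - ((a1+(a2+(a3+x)):ℕ):ℤ)) + 1))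
      = ∑ x ∈ Finset.range a4, ((4*i-2)*t + 1 + (b-4*i)*(h3+1) + (b-4*i)*(x:ℤ)) := by
    refine Finset.sum_congr rfl (fun x hx => ?_)
    rw [Finset.mem_range] at hx
    have harg : q - ((a1+(a2+(a3+x)):ℕ):ℤ) = -1 - h3 - (x:ℤ) := by push_cast; omega
    rw [harg]
    obtain ⟨hLe, hRe, -⟩ := caseD (n := -1 - h3 - (x:ℤ)) hi hb2 hb ht (by omega) (by omega)
    rw [hRe, hLe]; ring
  have hmerge : (∑ j ∈ Finset.range a1, (t%4 + 4*(j:ℤ))/3)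
      + (∑ x ∈ Finset.range a2, (t%4 + 4*((a1+x:ℕ):ℤ))/3)
      = ∑ j ∈ Finset.range (a1+a2), (t%4 + 4*(j:ℤ))/3 :=
    (Finset.sum_range_add (fun j => (t%4 + 4*(j:ℤ))/3) a1 a2).symm
  have hTot : (∑ j ∈ Finset.range (a1 + (a2 + (a3 + a4))),
        (Rt i b t (q - (j:ℤ)) - Lt t (q - (j:ℤ)) + 1))
      = (∑ j ∈ Finset.range a1, (i*t - 4*i*q + 1 + 4*i*(j:ℤ)))
        + ((∑ j ∈ Finset.range (a1+a2), (t%4 + 4*(j:ℤ))/3)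
        + ((∑ x ∈ Finset.range a2, (i*t + b - 3 + (b-4)*(x:ℤ)))
        + ((∑ x ∈ Finset.range a3, (i*t + t + 1 + (b-4)*(h2+1) + (b-4)*(x:ℤ)))
        + (∑ x ∈ Finset.range a4, ((4*i-2)*t + 1 + (b-4*i)*(h3+1) + (b-4*i)*(x:ℤ)))))) := by
    have hdA : (∑ j ∈ Finset.range a1, ((i*t - 4*i*q + 1 + 4*i*(j:ℤ)) + (t%4 + 4*(j:ℤ))/3))
        = (∑ j ∈ Finset.range a1, (i*t - 4*i*q + 1 + 4*i*(j:ℤ)))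
          + (∑ j ∈ Finset.range a1, (t%4 + 4*(j:ℤ))/3) := Finset.sum_add_distrib
    have hdB : (∑ x ∈ Finset.range a2, ((i*t + b - 3 + (b-4)*(x:ℤ)) + (t%4 + 4*((a1+x:ℕ):ℤ))/3))
        = (∑ x ∈ Finset.range a2, (i*t + b - 3 + (b-4)*(x:ℤ)))
          + (∑ x ∈ Finset.range a2, (t%4 + 4*((a1+x:ℕ):ℤ))/3) := Finset.sum_add_distrib
    rw [Finset.sum_range_add, Finset.sum_range_add, Finset.sum_range_add, eA, eB, eC, eD,
      hdA, hdB]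
    linear_combination hmerge
  have hA2 := sum_affine (i*t - 4*i*q + 1) (4*i) a1
  have hB2 := sum_affine (i*t + b - 3) (b-4) a2
  have hC2 := sum_affine (i*t + t + 1 + (b-4)*(h2+1)) (b-4) a3
  have hD2 := sum_affine ((4*i-2)*t + 1 + (b-4*i)*(h3+1)) (b-4*i) a4
  set PH := ∑ j ∈ Finset.range (a1+a2), (t%4 + 4*(j:ℤ))/3 with hPH
  set SA := ∑ j ∈ Finset.range a1, (i*t - 4*i*q + 1 + 4*i*(j:ℤ)) with hSA
  set SB := ∑ x ∈ Finset.range a2, (i*t + b - 3 + (b-4)*(x:ℤ)) with hSB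
  set SC := ∑ x ∈ Finset.range a3, (i*t + t + 1 + (b-4)*(h2+1) + (b-4)*(x:ℤ)) with hSC
  set SD := ∑ x ∈ Finset.range a4, ((4*i-2)*t + 1 + (b-4*i)*(h3+1) + (b-4*i)*(x:ℤ)) with hSD
  rw [hsplit, hTot, show 2*(SA + (PH + (SB + (SC + SD))))
      = 2*SA + (2*PH + (2*SB + (2*SC + 2*SD))) from by ring, hA2, hB2, hC2, hD2]
  clear hA2 hB2 hC2 hD2 hTot eA eB eC eD hmerge hsplit hSA hSB hSC hSD
  clear_value SA SB SC SD PH a1 a2 a3 a4 q h2 h3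
  clear SA SB SC SD
  have h12 : t%12 = 0 ∨ t%12 = 1 ∨ t%12 = 2 ∨ t%12 = 3 ∨ t%12 = 4 ∨ t%12 = 5 ∨ t%12 = 6
      ∨ t%12 = 7 ∨ t%12 = 8 ∨ t%12 = 9 ∨ t%12 = 10 ∨ t%12 = 11 := by omega
  rcases h12 with hr|hr|hr|hr|hr|hr|hr|hr|hr|hr|hr|hr
  · obtain ⟨s, hs0, hs⟩ : ∃ s : ℤ, 0 ≤ s ∧ t = 12*s + 0 := ⟨t/12, by omega, by omega⟩
    subst hs
    have hlen : a1 + a2 = 3*((3*s).toNat) + 1 := by omega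
    have hE : ((12*s+0)%4/3 + ((12*s+0)%4+4)/3 + ((12*s+0)%4+8)/3) = 3 := by omega
    have hsq : (6:ℤ)*((3*s).toNat:ℤ)*(((3*s).toNat:ℤ)-1) = 54*(s*s) - 18*s := by
      have hc : ((3*s).toNat:ℤ) = 3*s := by omega
      rw [hc]; ring
    have e_phi : 2*PH = 108*(s*s) + 6*s + 0 := by
      rw [hPH, hlen, Finset.sum_range_add, phi_block, hE, hsq]
      simp only [Finset.sum_range_succ, Finset.sum_range_zero]
      push_cast
      generalize s * s = ss
      omega
    rw [e_phi,
      show ((a1:ℕ):ℤ) = 3*s + 1 from by omega,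
      show ((a2:ℕ):ℤ) = 6*s + 0 from by omega,
      show ((a3:ℕ):ℤ) = 3*s + 0 from by omega,
      show ((a4:ℕ):ℤ) = 3*s + 0 from by omega,
      show q = 3*s + 0 from by omega,
      show h2 = 6*s + 0 from by omega,
      show h3 = 9*s + 0 from by omega]
    ring
  · obtain ⟨s, hs0, hs⟩ : ∃ s : ℤ, 0 ≤ s ∧ t = 12*s + 1 := ⟨t/12, by omega, by omega⟩
    subst hs
    have hlen : a1 + a2 = 3*((3*s).toNat) + 1 := by omega
    have hE : ((12*s+1)%4/3 + ((12*s+1)%4+4)/3 + ((12*s+1)%4+8)/3) = 4 := by omega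
    have hsq : (6:ℤ)*((3*s).toNat:ℤ)*(((3*s).toNat:ℤ)-1) = 54*(s*s) - 18*s := by
      have hc : ((3*s).toNat:ℤ) = 3*s := by omega
      rw [hc]; ring
    have e_phi : 2*PH = 108*(s*s) + 12*s + 0 := by
      rw [hPH, hlen, Finset.sum_range_add, phi_block, hE, hsq]
      simp only [Finset.sum_range_succ, Finset.sum_range_zero]
      push_cast
      generalize s * s = ss
      omega
    rw [e_phi,
      show ((a1:ℕ):ℤ) = 3*s + 1 from by omega,
      show ((a2:ℕ):ℤ) = 6*s + 0 from by omega,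
      show ((a3:ℕ):ℤ) = 3*s + 0 from by omega,
      show ((a4:ℕ):ℤ) = 3*s + 1 from by omega,
      show q = 3*s + 0 from by omega,
      show h2 = 6*s + 0 from by omega,
      show h3 = 9*s + 0 from by omega]
    ring
  · obtain ⟨s, hs0, hs⟩ : ∃ s : ℤ, 0 ≤ s ∧ t = 12*s + 2 := ⟨t/12, by omega, by omega⟩
    subst hs
    have hlen : a1 + a2 = 3*((3*s).toNat) + 2 := by omega
    have hE : ((12*s+2)%4/3 + ((12*s+2)%4+4)/3 + ((12*s+2)%4+8)/3) = 5 := by omega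
    have hsq : (6:ℤ)*((3*s).toNat:ℤ)*(((3*s).toNat:ℤ)-1) = 54*(s*s) - 18*s := by
      have hc : ((3*s).toNat:ℤ) = 3*s := by omega
      rw [hc]; ring
    have e_phi : 2*PH = 108*(s*s) + 42*s + 4 := by
      rw [hPH, hlen, Finset.sum_range_add, phi_block, hE, hsq]
      simp only [Finset.sum_range_succ, Finset.sum_range_zero]
      push_cast
      generalize s * s = ss
      omega
    rw [e_phi,
      show ((a1:ℕ):ℤ) = 3*s + 1 from by omega,
      show ((a2:ℕ):ℤ) = 6*s + 1 from by omega,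
      show ((a3:ℕ):ℤ) = 3*s + 0 from by omega,
      show ((a4:ℕ):ℤ) = 3*s + 1 from by omega,
      show q = 3*s + 0 from by omega,
      show h2 = 6*s + 1 from by omega,
      show h3 = 9*s + 1 from by omega]
    ring
  · obtain ⟨s, hs0, hs⟩ : ∃ s : ℤ, 0 ≤ s ∧ t = 12*s + 3 := ⟨t/12, by omega, by omega⟩
    subst hs
    have hlen : a1 + a2 = 3*((3*s).toNat) + 2 := by omega
    have hE : ((12*s+3)%4/3 + ((12*s+3)%4+4)/3 + ((12*s+3)%4+8)/3) = 6 := by omega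
    have hsq : (6:ℤ)*((3*s).toNat:ℤ)*(((3*s).toNat:ℤ)-1) = 54*(s*s) - 18*s := by
      have hc : ((3*s).toNat:ℤ) = 3*s := by omega
      rw [hc]; ring
    have e_phi : 2*PH = 108*(s*s) + 48*s + 6 := by
      rw [hPH, hlen, Finset.sum_range_add, phi_block, hE, hsq]
      simp only [Finset.sum_range_succ, Finset.sum_range_zero]
      push_cast
      generalize s * s = ss
      omega
    rw [e_phi,
      show ((a1:ℕ):ℤ) = 3*s + 1 from by omega,
      show ((a2:ℕ):ℤ) = 6*s + 1 from by omega,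
      show ((a3:ℕ):ℤ) = 3*s + 1 from by omega,
      show ((a4:ℕ):ℤ) = 3*s + 1 from by omega,
      show q = 3*s + 0 from by omega,
      show h2 = 6*s + 1 from by omega,
      show h3 = 9*s + 2 from by omega]
    ring
  · obtain ⟨s, hs0, hs⟩ : ∃ s : ℤ, 0 ≤ s ∧ t = 12*s + 4 := ⟨t/12, by omega, by omega⟩
    subst hs
    have hlen : a1 + a2 = 3*((3*s).toNat) + 4 := by omega
    have hE : ((12*s+4)%4/3 + ((12*s+4)%4+4)/3 + ((12*s+4)%4+8)/3) = 3 := by omega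
    have hsq : (6:ℤ)*((3*s).toNat:ℤ)*(((3*s).toNat:ℤ)-1) = 54*(s*s) - 18*s := by
      have hc : ((3*s).toNat:ℤ) = 3*s := by omega
      rw [hc]; ring
    have e_phi : 2*PH = 108*(s*s) + 78*s + 14 := by
      rw [hPH, hlen, Finset.sum_range_add, phi_block, hE, hsq]
      simp only [Finset.sum_range_succ, Finset.sum_range_zero]
      push_cast
      generalize s * s = ss
      omega
    rw [e_phi,
      show ((a1:ℕ):ℤ) = 3*s + 2 from by omega,
      show ((a2:ℕ):ℤ) = 6*s + 2 from by omega,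
      show ((a3:ℕ):ℤ) = 3*s + 1 from by omega,
      show ((a4:ℕ):ℤ) = 3*s + 1 from by omega,
      show q = 3*s + 1 from by omega,
      show h2 = 6*s + 2 from by omega,
      show h3 = 9*s + 3 from by omega]
    ring
  · obtain ⟨s, hs0, hs⟩ : ∃ s : ℤ, 0 ≤ s ∧ t = 12*s + 5 := ⟨t/12, by omega, by omega⟩
    subst hs
    have hlen : a1 + a2 = 3*((3*s).toNat) + 4 := by omega
    have hE : ((12*s+5)%4/3 + ((12*s+5)%4+4)/3 + ((12*s+5)%4+8)/3) = 4 := by omega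
    have hsq : (6:ℤ)*((3*s).toNat:ℤ)*(((3*s).toNat:ℤ)-1) = 54*(s*s) - 18*s := by
      have hc : ((3*s).toNat:ℤ) = 3*s := by omega
      rw [hc]; ring
    have e_phi : 2*PH = 108*(s*s) + 84*s + 16 := by
      rw [hPH, hlen, Finset.sum_range_add, phi_block, hE, hsq]
      simp only [Finset.sum_range_succ, Finset.sum_range_zero]
      push_cast
      generalize s * s = ss
      omega
    rw [e_phi,
      show ((a1:ℕ):ℤ) = 3*s + 2 from by omega,
      show ((a2:ℕ):ℤ) = 6*s + 2 from by omega,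
      show ((a3:ℕ):ℤ) = 3*s + 1 from by omega,
      show ((a4:ℕ):ℤ) = 3*s + 2 from by omega,
      show q = 3*s + 1 from by omega,
      show h2 = 6*s + 2 from by omega,
      show h3 = 9*s + 3 from by omega]
    ring
  · obtain ⟨s, hs0, hs⟩ : ∃ s : ℤ, 0 ≤ s ∧ t = 12*s + 6 := ⟨t/12, by omega, by omega⟩
    subst hs
    have hlen : a1 + a2 = 3*((3*s).toNat) + 5 := by omega
    have hE : ((12*s+6)%4/3 + ((12*s+6)%4+4)/3 + ((12*s+6)%4+8)/3) = 5 := by omega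
    have hsq : (6:ℤ)*((3*s).toNat:ℤ)*(((3*s).toNat:ℤ)-1) = 54*(s*s) - 18*s := by
      have hc : ((3*s).toNat:ℤ) = 3*s := by omega
      rw [hc]; ring
    have e_phi : 2*PH = 108*(s*s) + 114*s + 30 := by
      rw [hPH, hlen, Finset.sum_range_add, phi_block, hE, hsq]
      simp only [Finset.sum_range_succ, Finset.sum_range_zero]
      push_cast
      generalize s * s = ss
      omega
    rw [e_phi,
      show ((a1:ℕ):ℤ) = 3*s + 2 from by omega,
      show ((a2:ℕ):ℤ) = 6*s + 3 from by omega,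
      show ((a3:ℕ):ℤ) = 3*s + 1 from by omega,
      show ((a4:ℕ):ℤ) = 3*s + 2 from by omega,
      show q = 3*s + 1 from by omega,
      show h2 = 6*s + 3 from by omega,
      show h3 = 9*s + 4 from by omega]
    ring
  · obtain ⟨s, hs0, hs⟩ : ∃ s : ℤ, 0 ≤ s ∧ t = 12*s + 7 := ⟨t/12, by omega, by omega⟩
    subst hs
    have hlen : a1 + a2 = 3*((3*s).toNat) + 5 := by omega
    have hE : ((12*s+7)%4/3 + ((12*s+7)%4+4)/3 + ((12*s+7)%4+8)/3) = 6 := by omega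
    have hsq : (6:ℤ)*((3*s).toNat:ℤ)*(((3*s).toNat:ℤ)-1) = 54*(s*s) - 18*s := by
      have hc : ((3*s).toNat:ℤ) = 3*s := by omega
      rw [hc]; ring
    have e_phi : 2*PH = 108*(s*s) + 120*s + 34 := by
      rw [hPH, hlen, Finset.sum_range_add, phi_block, hE, hsq]
      simp only [Finset.sum_range_succ, Finset.sum_range_zero]
      push_cast
      generalize s * s = ss
      omega
    rw [e_phi,
      show ((a1:ℕ):ℤ) = 3*s + 2 from by omega,
      show ((a2:ℕ):ℤ) = 6*s + 3 from by omega,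
      show ((a3:ℕ):ℤ) = 3*s + 2 from by omega,
      show ((a4:ℕ):ℤ) = 3*s + 2 from by omega,
      show q = 3*s + 1 from by omega,
      show h2 = 6*s + 3 from by omega,
      show h3 = 9*s + 5 from by omega]
    ring
  · obtain ⟨s, hs0, hs⟩ : ∃ s : ℤ, 0 ≤ s ∧ t = 12*s + 8 := ⟨t/12, by omega, by omega⟩
    subst hs
    have hlen : a1 + a2 = 3*((3*s).toNat) + 7 := by omega
    have hE : ((12*s+8)%4/3 + ((12*s+8)%4+4)/3 + ((12*s+8)%4+8)/3) = 3 := by omega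
    have hsq : (6:ℤ)*((3*s).toNat:ℤ)*(((3*s).toNat:ℤ)-1) = 54*(s*s) - 18*s := by
      have hc : ((3*s).toNat:ℤ) = 3*s := by omega
      rw [hc]; ring
    have e_phi : 2*PH = 108*(s*s) + 150*s + 52 := by
      rw [hPH, hlen, Finset.sum_range_add, phi_block, hE, hsq]
      simp only [Finset.sum_range_succ, Finset.sum_range_zero]
      push_cast
      generalize s * s = ss
      omega
    rw [e_phi,
      show ((a1:ℕ):ℤ) = 3*s + 3 from by omega,
      show ((a2:ℕ):ℤ) = 6*s + 4 from by omega,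
      show ((a3:ℕ):ℤ) = 3*s + 2 from by omega,
      show ((a4:ℕ):ℤ) = 3*s + 2 from by omega,
      show q = 3*s + 2 from by omega,
      show h2 = 6*s + 4 from by omega,
      show h3 = 9*s + 6 from by omega]
    ring
  · obtain ⟨s, hs0, hs⟩ : ∃ s : ℤ, 0 ≤ s ∧ t = 12*s + 9 := ⟨t/12, by omega, by omega⟩
    subst hs
    have hlen : a1 + a2 = 3*((3*s).toNat) + 7 := by omega
    have hE : ((12*s+9)%4/3 + ((12*s+9)%4+4)/3 + ((12*s+9)%4+8)/3) = 4 := by omega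
    have hsq : (6:ℤ)*((3*s).toNat:ℤ)*(((3*s).toNat:ℤ)-1) = 54*(s*s) - 18*s := by
      have hc : ((3*s).toNat:ℤ) = 3*s := by omega
      rw [hc]; ring
    have e_phi : 2*PH = 108*(s*s) + 156*s + 56 := by
      rw [hPH, hlen, Finset.sum_range_add, phi_block, hE, hsq]
      simp only [Finset.sum_range_succ, Finset.sum_range_zero]
      push_cast
      generalize s * s = ss
      omega
    rw [e_phi,
      show ((a1:ℕ):ℤ) = 3*s + 3 from by omega,
      show ((a2:ℕ):ℤ) = 6*s + 4 from by omega,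
      show ((a3:ℕ):ℤ) = 3*s + 2 from by omega,
      show ((a4:ℕ):ℤ) = 3*s + 3 from by omega,
      show q = 3*s + 2 from by omega,
      show h2 = 6*s + 4 from by omega,
      show h3 = 9*s + 6 from by omega]
    ring
  · obtain ⟨s, hs0, hs⟩ : ∃ s : ℤ, 0 ≤ s ∧ t = 12*s + 10 := ⟨t/12, by omega, by omega⟩
    subst hs
    have hlen : a1 + a2 = 3*((3*s).toNat) + 8 := by omega
    have hE : ((12*s+10)%4/3 + ((12*s+10)%4+4)/3 + ((12*s+10)%4+8)/3) = 5 := by omega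
    have hsq : (6:ℤ)*((3*s).toNat:ℤ)*(((3*s).toNat:ℤ)-1) = 54*(s*s) - 18*s := by
      have hc : ((3*s).toNat:ℤ) = 3*s := by omega
      rw [hc]; ring
    have e_phi : 2*PH = 108*(s*s) + 186*s + 80 := by
      rw [hPH, hlen, Finset.sum_range_add, phi_block, hE, hsq]
      simp only [Finset.sum_range_succ, Finset.sum_range_zero]
      push_cast
      generalize s * s = ss
      omega
    rw [e_phi,
      show ((a1:ℕ):ℤ) = 3*s + 3 from by omega,
      show ((a2:ℕ):ℤ) = 6*s + 5 from by omega,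
      show ((a3:ℕ):ℤ) = 3*s + 2 from by omega,
      show ((a4:ℕ):ℤ) = 3*s + 3 from by omega,
      show q = 3*s + 2 from by omega,
      show h2 = 6*s + 5 from by omega,
      show h3 = 9*s + 7 from by omega]
    ring
  · obtain ⟨s, hs0, hs⟩ : ∃ s : ℤ, 0 ≤ s ∧ t = 12*s + 11 := ⟨t/12, by omega, by omega⟩
    subst hs
    have hlen : a1 + a2 = 3*((3*s).toNat) + 8 := by omega
    have hE : ((12*s+11)%4/3 + ((12*s+11)%4+4)/3 + ((12*s+11)%4+8)/3) = 6 := by omega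
    have hsq : (6:ℤ)*((3*s).toNat:ℤ)*(((3*s).toNat:ℤ)-1) = 54*(s*s) - 18*s := by
      have hc : ((3*s).toNat:ℤ) = 3*s := by omega
      rw [hc]; ring
    have e_phi : 2*PH = 108*(s*s) + 192*s + 86 := by
      rw [hPH, hlen, Finset.sum_range_add, phi_block, hE, hsq]
      simp only [Finset.sum_range_succ, Finset.sum_range_zero]
      push_cast
      generalize s * s = ss
      omega
    rw [e_phi,
      show ((a1:ℕ):ℤ) = 3*s + 3 from by omega,
      show ((a2:ℕ):ℤ) = 6*s + 5 from by omega,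
      show ((a3:ℕ):ℤ) = 3*s + 3 from by omega,
      show ((a4:ℕ):ℤ) = 3*s + 3 from by omega,
      show q = 3*s + 2 from by omega,
      show h2 = 6*s + 5 from by omega,
      show h3 = 9*s + 8 from by omega]
    ring

def pairCast (p : ℤ × ℤ) : ℝ × ℝ := ((p.1 : ℝ), (p.2 : ℝ))

lemma pairCast_inj : Function.Injective pairCast := by
  intro p q h
  simp only [pairCast, Prod.ext_iff] at h
  obtain ⟨h1, h2⟩ := h
  exact Prod.ext (by exact_mod_cast h1) (by exact_mod_cast h2)

noncomputable def rowFinset (i b t : ℤ) : Finset (ℤ × ℤ) :=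
  (Finset.range ((t/4 + t + 1).toNat)).biUnion
    (fun j => (Finset.Icc (Lt t (t/4 - (j:ℤ))) (Rt i b t (t/4 - (j:ℤ)))).image
      (fun m => (m, t/4 - (j:ℤ))))

lemma mem_rowFinset {i b t : ℤ} (ht : 1 ≤ t) {p : ℤ × ℤ} :
    p ∈ rowFinset i b t ↔
      (-t ≤ p.2 ∧ p.2 ≤ t/4 ∧ Lt t p.2 ≤ p.1 ∧ p.1 ≤ Rt i b t p.2) := by
  simp only [rowFinset, Finset.mem_biUnion, Finset.mem_range, Finset.mem_image, Finset.mem_Icc]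
  constructor
  · rintro ⟨j, hj, m, ⟨h1, h2⟩, rfl⟩
    exact ⟨by omega, by omega, h1, h2⟩
  · rintro ⟨h1, h2, h3, h4⟩
    have harg : t/4 - ((t/4 - p.2).toNat : ℤ) = p.2 := by omega
    refine ⟨(t/4 - p.2).toNat, ?_, p.1, ?_, ?_⟩
    · omega
    · rw [harg]; exact ⟨h3, h4⟩
    · rw [harg]

lemma LR_le {i b t : ℤ} (hi : 1 ≤ i) (hb2 : 2 ≤ b) (hb : b ≤ 4*i+4) (ht : 1 ≤ t)
    {n : ℤ} (hn1 : -t ≤ n) (hn2 : n ≤ t/4) : Lt t n ≤ Rt i b t n := by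
  rcases le_or_gt 0 n with h|h
  · exact (caseA hi hb2 hb ht h hn2).2.2
  rcases le_or_gt (-(t/2)) n with h'|h'
  · exact (caseB hi hb2 hb ht h' (by omega)).2.2
  rcases le_or_gt (-((3*t)/4)) n with h''|h''
  · exact (caseC hi hb2 hb ht h'' (by omega)).2.2
  · exact (caseD hi hb2 hb ht hn1 (by omega)).2.2

lemma card_rowFinset (i b t : ℤ) (hi : 1 ≤ i) (hb2 : 2 ≤ b) (hb : b ≤ 4*i+4) (ht : 1 ≤ t) :
    2 * ((rowFinset i b t).card : ℤ) = 2*i*t^2 + (b-2)*(t^2+t) + 2*t + 2 := by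
  have hdisj : ∀ x ∈ Finset.range ((t/4 + t + 1).toNat), ∀ y ∈ Finset.range ((t/4 + t + 1).toNat),
      x ≠ y → Disjoint
        ((Finset.Icc (Lt t (t/4 - (x:ℤ))) (Rt i b t (t/4 - (x:ℤ)))).image
          (fun m => (m, t/4 - (x:ℤ))))
        ((Finset.Icc (Lt t (t/4 - (y:ℤ))) (Rt i b t (t/4 - (y:ℤ)))).image
          (fun m => (m, t/4 - (y:ℤ)))) := by
    intro x _ y _ hxy
    rw [Finset.disjoint_left]
    rintro p hp hq
    simp only [Finset.mem_image] at hp hq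
    obtain ⟨m1, _, rfl⟩ := hp
    obtain ⟨m2, _, h⟩ := hq
    have : (x:ℤ) = y := by
      have := (Prod.ext_iff.1 h).2
      omega
    have hxy2 : x = y := by exact_mod_cast this
    exact hxy hxy2
  rw [rowFinset, Finset.card_biUnion hdisj]
  have hcollapse : ∀ j ∈ Finset.range ((t/4 + t + 1).toNat),
      (((Finset.Icc (Lt t (t/4 - (j:ℤ))) (Rt i b t (t/4 - (j:ℤ)))).image
        (fun m => (m, t/4 - (j:ℤ)))).card : ℤ)
      = Rt i b t (t/4 - (j:ℤ)) - Lt t (t/4 - (j:ℤ)) + 1 := by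
    intro j hj
    rw [Finset.mem_range] at hj
    rw [Finset.card_image_of_injective _ (fun m1 m2 h => (Prod.ext_iff.1 h).1), Int.card_Icc]
    have hle : Lt t (t/4 - (j:ℤ)) ≤ Rt i b t (t/4 - (j:ℤ)) :=
      LR_le hi hb2 hb ht (by omega) (by omega)
    omega
  push_cast
  rw [Finset.sum_congr rfl hcollapse]
  exact count_main i b t hi hb2 hb ht

lemma Hs_inter_lattice (i b t : ℤ) (hi : 1 ≤ i) (hb2 : 2 ≤ b) (hb : b ≤ 4*i+4) (ht : 1 ≤ t) :
    Hs (i:ℝ) (b:ℝ) (t:ℝ) ∩ latticePts = pairCast '' ((rowFinset i b t : Finset (ℤ×ℤ)) : Set (ℤ × ℤ)) := by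
  ext p
  constructor
  · rintro ⟨hp, m, n, rfl⟩
    rw [mem_Hs] at hp
    obtain ⟨c1, c2, c3, c4, c5, c6⟩ := hp
    dsimp only at c1 c2 c3 c4 c5 c6
    have i1 : -t ≤ n := by exact_mod_cast c1
    have i2 : -t ≤ m := by exact_mod_cast c2
    have i3 : -3*m + 4*n ≤ t := by
      have : ((-3*m + 4*n : ℤ) : ℝ) ≤ ((t:ℤ):ℝ) := by push_cast; linarith
      exact_mod_cast this
    have i4 : m + 4*i*n ≤ i*t := by
      have : ((m + 4*i*n : ℤ) : ℝ) ≤ ((i*t:ℤ):ℝ) := by push_cast; linarith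
      exact_mod_cast this
    have i5 : m + (b-4)*n ≤ i*t := by
      have : ((m + (b-4)*n : ℤ) : ℝ) ≤ ((i*t:ℤ):ℝ) := by push_cast; linarith
      exact_mod_cast this
    have i6 : m + (b-4*i)*n ≤ (4*i-3)*t := by
      have : ((m + (b-4*i)*n : ℤ) : ℝ) ≤ (((4*i-3)*t:ℤ):ℝ) := by push_cast; linarith
      exact_mod_cast this
    refine ⟨(m, n), ?_, rfl⟩
    rw [Finset.mem_coe, mem_rowFinset ht]
    have hn4 : n ≤ t/4 := by
      by_contra hcon
      push_neg at hcon
      have h1 : t - 4*n ≤ -1 := by omega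
      have h2 : m ≤ i*(t - 4*n) := by nlinarith
      have h3 : i*(t - 4*n) ≤ t - 4*n := by nlinarith [mul_nonneg (by linarith : (0:ℤ) ≤ i-1) (by linarith : (0:ℤ) ≤ 4*n - t)]
      omega
    refine ⟨i1, hn4, ?_, ?_⟩
    · exact max_le (by linarith) (by omega)
    · exact le_min (by linarith) (le_min (by linarith) (by linarith))
  · rintro ⟨pp, hpp, rfl⟩
    rw [Finset.mem_coe, mem_rowFinset ht] at hpp
    obtain ⟨h1, h2, h3, h4⟩ := hpp
    have g2 : -t ≤ pp.1 := le_trans (le_max_left _ _) h3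
    have g3 : -3*pp.1 + 4*pp.2 ≤ t := by
      have := le_trans (le_max_right _ _) h3
      omega
    have g4 : pp.1 + 4*i*pp.2 ≤ i*t := by linarith [le_trans h4 (min_le_left _ _)]
    have g5 : pp.1 + (b-4)*pp.2 ≤ i*t := by
      linarith [le_trans h4 ((min_le_right _ _).trans (min_le_left _ _))]
    have g6 : pp.1 + (b-4*i)*pp.2 ≤ (4*i-3)*t := by
      linarith [le_trans h4 ((min_le_right _ _).trans (min_le_right _ _))]
    constructor
    · rw [mem_Hs]
      dsimp only [pairCast]
      have r1 : ((-t : ℤ) : ℝ) ≤ ((pp.2 : ℤ) : ℝ) := by exact_mod_cast h1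
      have r2 : ((-t : ℤ) : ℝ) ≤ ((pp.1 : ℤ) : ℝ) := by exact_mod_cast g2
      have r3 : ((-3*pp.1 + 4*pp.2 : ℤ) : ℝ) ≤ ((t : ℤ) : ℝ) := by exact_mod_cast g3
      have r4 : ((pp.1 + 4*i*pp.2 : ℤ) : ℝ) ≤ ((i*t : ℤ) : ℝ) := by exact_mod_cast g4
      have r5 : ((pp.1 + (b-4)*pp.2 : ℤ) : ℝ) ≤ ((i*t : ℤ) : ℝ) := by exact_mod_cast g5
      have r6 : ((pp.1 + (b-4*i)*pp.2 : ℤ) : ℝ) ≤ (((4*i-3)*t : ℤ) : ℝ) := by exact_mod_cast g6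
      push_cast at r1 r2 r3 r4 r5 r6
      exact ⟨by linarith, by linarith, by linarith, by linarith, by linarith, by linarith⟩
    · exact ⟨pp.1, pp.2, rfl⟩

lemma interior_lattice_eq (i b : ℤ) (hi : 1 ≤ i) (hb2 : 2 ≤ b) (hb : b ≤ 4*i+4) :
    interior (Hs (i:ℝ) (b:ℝ) 1) ∩ latticePts
      = pairCast '' ((((Finset.Icc (0:ℤ) (i-1)).image (fun m => (m, (0:ℤ)))) : Finset (ℤ×ℤ)) : Set (ℤ×ℤ)) := by
  ext p
  constructor
  · rintro ⟨hp, m, n, rfl⟩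
    rw [mem_interior_Hs_pair] at hp
    obtain ⟨c1, c2, c3, c4, c5, c6⟩ := hp
    have i1 : -1 < n := by exact_mod_cast c1
    have i2 : -1 < m := by exact_mod_cast c2
    have i3 : -3*m + 4*n < 1 := by
      have : ((-3*m + 4*n : ℤ):ℝ) < ((1:ℤ):ℝ) := by push_cast; linarith
      exact_mod_cast this
    have i4 : m + 4*i*n < i := by
      have : ((m + 4*i*n : ℤ):ℝ) < ((i:ℤ):ℝ) := by push_cast; linarith
      exact_mod_cast this
    have hn : n = 0 := by
      rcases lt_trichotomy n 0 with h|h|h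
      · omega
      · exact h
      · exfalso
        have h1 : i*1 ≤ i*n := by nlinarith
        nlinarith
    subst hn
    refine ⟨(m, 0), ?_, rfl⟩
    simp only [Finset.coe_image, Set.mem_image, Finset.mem_coe, Finset.mem_Icc]
    exact ⟨m, by omega, rfl⟩
  · rintro ⟨pp, hpp, rfl⟩
    simp only [Finset.coe_image, Set.mem_image, Finset.mem_coe, Finset.mem_Icc] at hpp
    obtain ⟨m, hm, rfl⟩ := hpp
    constructor
    · rw [show pairCast (m, (0:ℤ)) = (((m:ℤ):ℝ), ((0:ℤ):ℝ)) from rfl, mem_interior_Hs_pair]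
      have r0 : ((0:ℤ):ℝ) ≤ ((m:ℤ):ℝ) := by exact_mod_cast (by omega : (0:ℤ) ≤ m)
      have r2 : ((-1:ℤ):ℝ) < ((m:ℤ):ℝ) := by exact_mod_cast (by omega : (-1:ℤ) < m)
      have r4 : ((m:ℤ):ℝ) < ((i:ℤ):ℝ) := by exact_mod_cast (by omega : m < i)
      have r6 : ((m:ℤ):ℝ) < ((4*i-3:ℤ):ℝ) := by exact_mod_cast (by omega : m < 4*i-3)
      push_cast at r0 r2 r4 r6
      push_cast
      refine ⟨by norm_num, by linarith, by linarith, by linarith, by linarith, by linarith⟩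
    · exact ⟨m, 0, rfl⟩

lemma boundary_lattice_eq (i b : ℤ) (hi : 1 ≤ i) (hb2 : 2 ≤ b) (hb : b ≤ 4*i+4) :
    (Hs (i:ℝ) (b:ℝ) 1 \ interior (Hs (i:ℝ) (b:ℝ) 1)) ∩ latticePts
      = pairCast '' ((((Finset.Icc (-1:ℤ) (b-3)).image (fun m => (m, (-1:ℤ))))
          ∪ {((i:ℤ), (0:ℤ))} : Finset (ℤ×ℤ)) : Set (ℤ×ℤ)) := by
  ext p
  constructor
  · rintro ⟨⟨hp, hnotint⟩, m, n, rfl⟩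
    rw [mem_Hs_pair] at hp
    obtain ⟨c1, c2, c3, c4, c5, c6⟩ := hp
    have i1 : -1 ≤ n := by exact_mod_cast c1
    have i2 : -1 ≤ m := by exact_mod_cast c2
    have i3 : -3*m + 4*n ≤ 1 := by
      have : ((-3*m + 4*n : ℤ):ℝ) ≤ ((1:ℤ):ℝ) := by push_cast; linarith
      exact_mod_cast this
    have i4 : m + 4*i*n ≤ i := by
      have : ((m + 4*i*n : ℤ):ℝ) ≤ ((i:ℤ):ℝ) := by push_cast; linarith
      exact_mod_cast this
    have i6 : m + (b-4*i)*n ≤ 4*i-3 := by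
      have : ((m + (b-4*i)*n : ℤ):ℝ) ≤ ((4*i-3:ℤ):ℝ) := by push_cast; linarith
      exact_mod_cast this
    have hn : n = -1 ∨ n = 0 := by
      rcases lt_trichotomy n 0 with h|h|h
      · left; omega
      · right; exact h
      · exfalso
        have h1 : i*1 ≤ i*n := by nlinarith
        nlinarith
    refine ⟨(m, n), ?_, rfl⟩
    simp only [Finset.coe_union, Set.mem_union, Finset.coe_image, Set.mem_image,
      Finset.mem_coe, Finset.mem_Icc, Finset.coe_singleton, Set.mem_singleton_iff]
    rcases hn with hn | hn
    · subst hn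
      left
      exact ⟨m, by omega, rfl⟩
    · subst hn
      right
      have hmi : m = i := by
        by_contra hne
        have hmlt : m ≤ i - 1 := by omega
        apply hnotint
        rw [mem_interior_Hs_pair]
        have r0 : ((0:ℤ):ℝ) ≤ ((m:ℤ):ℝ) := by exact_mod_cast (by omega : (0:ℤ) ≤ m)
        have r2 : ((-1:ℤ):ℝ) < ((m:ℤ):ℝ) := by exact_mod_cast (by omega : (-1:ℤ) < m)
        have r4 : ((m:ℤ):ℝ) < ((i:ℤ):ℝ) := by exact_mod_cast (by omega : m < i)
        have r6 : ((m:ℤ):ℝ) < ((4*i-3:ℤ):ℝ) := by exact_mod_cast (by omega : m < 4*i-3)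
        push_cast at r0 r2 r4 r6
        push_cast
        refine ⟨by norm_num, by linarith, by linarith, by linarith, by linarith, by linarith⟩
      rw [hmi]
  · rintro ⟨pp, hpp, rfl⟩
    simp only [Finset.coe_union, Set.mem_union, Finset.coe_image, Set.mem_image,
      Finset.mem_coe, Finset.mem_Icc, Finset.coe_singleton, Set.mem_singleton_iff] at hpp
    have hIr : (1:ℝ) ≤ (i:ℝ) := by exact_mod_cast hi
    have hBr2 : (2:ℝ) ≤ (b:ℝ) := by exact_mod_cast hb2
    have hBr : (b:ℝ) ≤ 4*(i:ℝ)+4 := by exact_mod_cast hb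
    rcases hpp with ⟨m, hm, rfl⟩ | hpp
    · have rm1 : ((-1:ℤ):ℝ) ≤ ((m:ℤ):ℝ) := by exact_mod_cast hm.1
      have rm2 : ((m:ℤ):ℝ) ≤ ((b-3:ℤ):ℝ) := by exact_mod_cast hm.2
      push_cast at rm1 rm2
      refine ⟨⟨?_, ?_⟩, m, -1, rfl⟩
      · rw [show pairCast (m, (-1:ℤ)) = (((m:ℤ):ℝ), ((-1:ℤ):ℝ)) from rfl, mem_Hs_pair]
        push_cast
        refine ⟨by norm_num, by linarith, by linarith, by nlinarith, by nlinarith, by nlinarith⟩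
      · rw [show pairCast (m, (-1:ℤ)) = (((m:ℤ):ℝ), ((-1:ℤ):ℝ)) from rfl, mem_interior_Hs_pair]
        push_cast
        rintro ⟨d1, -⟩
        linarith
    · subst hpp
      refine ⟨⟨?_, ?_⟩, i, 0, rfl⟩
      · rw [show pairCast (i, (0:ℤ)) = (((i:ℤ):ℝ), ((0:ℤ):ℝ)) from rfl, mem_Hs_pair]
        push_cast
        refine ⟨by norm_num, by linarith, by linarith, by linarith, by linarith, by linarith⟩
      · rw [show pairCast (i, (0:ℤ)) = (((i:ℤ):ℝ), ((0:ℤ):ℝ)) from rfl, mem_interior_Hs_pair]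
        push_cast
        rintro ⟨-, -, -, d4, -⟩
        linarith

lemma top_vertex {I B : ℝ} (hI : 1 ≤ I) {p : ℝ × ℝ} (hp : p ∈ Hs I B 1) :
    p.2 ≤ 1/4 ∧ (p.2 = 1/4 → p = ((0:ℝ), (1/4:ℝ))) := by
  rw [mem_Hs] at hp
  obtain ⟨c1, c2, c3, c4, c5, c6⟩ := hp
  have key : 12*(I*p.2) + 4*p.2 ≤ 3*I + 1 := by nlinarith
  have hy : p.2 ≤ 1/4 := by nlinarith [key, hI]
  refine ⟨hy, fun he => ?_⟩
  have h1 : p.1 ≤ 0 := by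
    have : p.1 + 4*I*(1/4) ≤ I*1 := by rw [← he]; exact c4
    linarith
  have h2 : 0 ≤ p.1 := by
    have : -3*p.1 + 4*(1/4) ≤ 1 := by rw [← he]; exact c3
    linarith
  exact Prod.ext (le_antisymm h1 h2) he

lemma vB_mem {I B : ℝ} (hI : 1 ≤ I) (hB2 : 2 ≤ B) (hB : B ≤ 4*I+4) :
    ((0:ℝ), (1/4:ℝ)) ∈ Hs I B 1 := by
  rw [mem_Hs_pair]
  refine ⟨by norm_num, by norm_num, by norm_num, by nlinarith, by nlinarith, by nlinarith⟩

lemma denom_lower {I B : ℝ} (hI : 1 ≤ I) (hB2 : 2 ≤ B) (hB : B ≤ 4*I+4) (k : ℕ) (hk : 0 < k)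
    (hsub : Set.extremePoints ℝ ((k:ℝ) • Hs I B 1) ⊆ latticePts) : 4 ≤ k := by
  have k0 : (0:ℝ) < (k:ℝ) := by exact_mod_cast hk
  have hvB := vB_mem hI hB2 hB
  have hmem : (((0:ℝ), (k:ℝ)/4) : ℝ × ℝ) ∈ Set.extremePoints ℝ ((k:ℝ) • Hs I B 1) := by
    constructor
    · refine ⟨((0:ℝ), (1/4:ℝ)), hvB, ?_⟩
      apply Prod.ext <;> simp <;> ring
    · rintro x1 hx1 x2 hx2 ⟨a, c, ha, hc, hac, heq⟩
      obtain ⟨y1, hy1, rfl⟩ := hx1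
      obtain ⟨y2, hy2, rfl⟩ := hx2
      have t1 := top_vertex hI hy1
      have t2 := top_vertex hI hy2
      have h2nd : a * ((k:ℝ) * y1.2) + c * ((k:ℝ) * y2.2) = (k:ℝ)/4 := by
        have := congrArg Prod.snd heq
        simpa [Prod.smul_def, smul_eq_mul] using this
      have e1 : y1.2 = 1/4 := by
        by_contra hne
        have hlt : y1.2 < 1/4 := lt_of_le_of_ne t1.1 hne
        have f1 : a * ((k:ℝ) * y1.2) < a * ((k:ℝ) * (1/4)) :=
          mul_lt_mul_of_pos_left (mul_lt_mul_of_pos_left hlt k0) ha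
        have f2 : c * ((k:ℝ) * y2.2) ≤ c * ((k:ℝ) * (1/4)) :=
          mul_le_mul_of_nonneg_left (mul_le_mul_of_nonneg_left t2.1 k0.le) hc.le
        nlinarith
      have e2 : y2.2 = 1/4 := by
        by_contra hne
        have hlt : y2.2 < 1/4 := lt_of_le_of_ne t2.1 hne
        have f1 : c * ((k:ℝ) * y2.2) < c * ((k:ℝ) * (1/4)) :=
          mul_lt_mul_of_pos_left (mul_lt_mul_of_pos_left hlt k0) hc
        have f2 : a * ((k:ℝ) * y1.2) ≤ a * ((k:ℝ) * (1/4)) :=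
          mul_le_mul_of_nonneg_left (mul_le_mul_of_nonneg_left t1.1 k0.le) ha.le
        nlinarith
      have hy1' : y1 = ((0:ℝ), (1/4:ℝ)) := t1.2 e1
      have hy2' : y2 = ((0:ℝ), (1/4:ℝ)) := t2.2 e2
      subst hy1'; subst hy2'
      apply Prod.ext <;> simp <;> ring
  obtain ⟨m, n, hmn⟩ := hsub hmem
  have h2 : ((k:ℝ))/4 = (n:ℝ) := (Prod.ext_iff.1 hmn).2
  have h3 : ((k:ℕ):ℤ) = 4*n := by
    have : ((k:ℝ)) = 4*(n:ℝ) := by linarith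
    exact_mod_cast this
  omega

lemma smul4_lattice {I B : ℝ} {i b : ℤ} (hIc : I = (i:ℝ)) (hBc : B = (b:ℝ)) :
    (4:ℝ) • Vset I B ⊆ latticePts := by
  rintro p ⟨q, hq, rfl⟩
  simp only [Vset, mem_insert_iff, mem_singleton_iff] at hq
  subst hIc; subst hBc
  rcases hq with h|h|h|h|h|h <;> subst h
  · exact ⟨4*i, 0, by apply Prod.ext <;> simp <;> push_cast <;> ring⟩
  · exact ⟨0, 1, by apply Prod.ext <;> simp <;> norm_num⟩
  · exact ⟨-4, -2, by apply Prod.ext <;> simp <;> norm_num⟩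
  · exact ⟨-4, -4, by apply Prod.ext <;> simp <;> norm_num⟩
  · exact ⟨4*b-12, -4, by apply Prod.ext <;> simp <;> push_cast <;> ring⟩
  · exact ⟨4*i+3*b-12, -3, by apply Prod.ext <;> simp <;> push_cast <;> ring⟩

end Stmt11

open Stmt11 in
theorem stmt_11 (i b : ℕ) (hi : 0 < i) (hb2 : 2 ≤ b) (hb : b ≤ 4 * i + 4)
    (P : Set (ℝ × ℝ))
    (hP : P = convexHull ℝ
      ({((i : ℝ), 0), (0, 1/4), (-1, -(1/2)), (-1, -1), ((b : ℝ) - 3, -1),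
        ((i : ℝ) + (3/4) * ((b : ℝ) - 4), -(3/4))} : Set (ℝ × ℝ))) :
    IsRatPolygon P ∧ HasDenom P 4 ∧ IsPIP P ∧
      (interior P ∩ latticePts).ncard = i ∧
      (frontier P ∩ latticePts).ncard = b := by
  have hI : (1:ℝ) ≤ (i:ℝ) := by exact_mod_cast hi
  have hB2 : (2:ℝ) ≤ (b:ℝ) := by exact_mod_cast hb2
  have hBU : (b:ℝ) ≤ 4*(i:ℝ)+4 := by exact_mod_cast hb
  have hiz : (1:ℤ) ≤ (i:ℤ) := by exact_mod_cast hi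
  have hbz2 : (2:ℤ) ≤ (b:ℤ) := by exact_mod_cast hb2
  have hbz : (b:ℤ) ≤ 4*(i:ℤ)+4 := by exact_mod_cast hb
  have hPV : P = convexHull ℝ (Vset (i:ℝ) (b:ℝ)) := hP
  have hPH : P = Hs (i:ℝ) (b:ℝ) 1 := hPV.trans (hull_eq _ _ hI hB2 hBU)
  have hint : interior P ∩ latticePts
      = pairCast '' ((((Finset.Icc (0:ℤ) ((i:ℤ)-1)).image (fun m => (m, (0:ℤ)))) :
          Finset (ℤ×ℤ)) : Set (ℤ×ℤ)) := by
    rw [hPH]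
    have := interior_lattice_eq (i:ℤ) (b:ℤ) hiz hbz2 hbz
    simp only [Int.cast_natCast] at this
    exact this
  refine ⟨?_, ?_, ?_, ?_, ?_⟩
  · -- IsRatPolygon
    refine ⟨{((i:ℚ), 0), (0, 1/4), (-1, -(1/2)), (-1, -1), ((b:ℚ)-3, -1),
      ((i:ℚ)+(3/4)*((b:ℚ)-4), -(3/4))}, ?_, ?_⟩
    · rw [hPV]
      congr 1
      have e1 : qpt ((i:ℚ), 0) = ((i:ℝ), (0:ℝ)) := by simp [qpt]
      have e2 : qpt (0, 1/4) = ((0:ℝ), (1/4:ℝ)) := by norm_num [qpt]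
      have e3 : qpt (-1, -(1/2)) = ((-1:ℝ), (-(1/2):ℝ)) := by norm_num [qpt]
      have e4 : qpt (-1, -1) = ((-1:ℝ), (-1:ℝ)) := by norm_num [qpt]
      have e5 : qpt ((b:ℚ)-3, -1) = (((b:ℝ)-3 : ℝ), (-1:ℝ)) := by
        apply Prod.ext <;> simp [qpt] <;> push_cast <;> ring
      have e6 : qpt ((i:ℚ)+(3/4)*((b:ℚ)-4), -(3/4))
          = (((i:ℝ) + (3/4)*((b:ℝ)-4) : ℝ), (-(3/4):ℝ)) := by
        apply Prod.ext <;> simp [qpt] <;> push_cast <;> ring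
      simp only [Finset.coe_insert, Finset.coe_singleton, Set.image_insert_eq,
        Set.image_singleton, e1, e2, e3, e4, e5, e6, Vset]
    · refine ⟨((0:ℝ), (0:ℝ)), ?_⟩
      rw [hPH, mem_interior_Hs_pair]
      refine ⟨by norm_num, by norm_num, by norm_num, by nlinarith, by nlinarith, by nlinarith⟩
  · -- HasDenom
    constructor
    · refine ⟨by norm_num, ?_⟩
      intro p hp
      have h4 : ((4:ℕ):ℝ) = (4:ℝ) := by norm_num
      rw [h4, hPV, ← convexHull_smul] at hp
      have hIc : (i:ℝ) = (((i:ℕ):ℤ):ℝ) := by push_cast; ring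
      have hBc : (b:ℝ) = (((b:ℕ):ℤ):ℝ) := by push_cast; ring
      exact smul4_lattice hIc hBc (extremePoints_convexHull_subset hp)
    · rintro k ⟨hk, hsub⟩
      rw [hPH] at hsub
      exact denom_lower hI hB2 hBU k hk hsub
  · -- IsPIP
    have hcard : ∀ t:ℕ, 0 < t → 2*((ehr P t : ℤ))
        = 2*(i:ℤ)*(t:ℤ)^2 + ((b:ℤ)-2)*((t:ℤ)^2+(t:ℤ)) + 2*(t:ℤ) + 2 := by
      intro t ht
      have htr : (0:ℝ) < ((t:ℕ):ℝ) := by exact_mod_cast ht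
      have htz : (1:ℤ) ≤ (t:ℤ) := by exact_mod_cast ht
      have hset : ((t:ℕ):ℝ) • P ∩ latticePts
          = pairCast '' ((rowFinset (i:ℤ) (b:ℤ) (t:ℤ) : Finset (ℤ×ℤ)) : Set (ℤ×ℤ)) := by
        rw [hPH, smul_Hs _ _ htr]
        have := Hs_inter_lattice (i:ℤ) (b:ℤ) (t:ℤ) hiz hbz2 hbz htz
        simp only [Int.cast_natCast] at this
        exact this
      have hehr : ehr P t = (rowFinset (i:ℤ) (b:ℤ) (t:ℤ)).card := by
        rw [ehr, hset, Set.ncard_image_of_injective _ pairCast_inj, Set.ncard_coe_finset]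
      rw [hehr]
      exact card_rowFinset _ _ _ hiz hbz2 hbz htz
    refine ⟨Polynomial.C ((2*(i:ℚ)+(b:ℚ)-2)/2) * Polynomial.X^2
      + Polynomial.C ((b:ℚ)/2) * Polynomial.X + Polynomial.C 1, ?_⟩
    intro t ht
    have h1 := hcard t ht
    have h2 : 2*((ehr P t : ℚ)) = 2*(i:ℚ)*(t:ℚ)^2 + ((b:ℚ)-2)*((t:ℚ)^2+(t:ℚ)) + 2*(t:ℚ) + 2 := by
      exact_mod_cast h1
    simp only [Polynomial.eval_add, Polynomial.eval_mul, Polynomial.eval_pow,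
      Polynomial.eval_C, Polynomial.eval_X]
    linarith
  · -- interior count
    rw [hint, Set.ncard_image_of_injective _ pairCast_inj, Set.ncard_coe_finset,
      Finset.card_image_of_injective _ (fun m1 m2 h => (Prod.ext_iff.1 h).1), Int.card_Icc]
    omega
  · -- boundary count
    have hfin : (Vset (i:ℝ) (b:ℝ)).Finite := by
      unfold Vset
      exact ((((((Set.finite_singleton _).insert _).insert _).insert _).insert _).insert _)
    have hcl : IsClosed P := by
      rw [hPV]; exact (hfin.isCompact_convexHull ℝ).isClosed
    have hbd : frontier P ∩ latticePts
        = pairCast '' (((((Finset.Icc (-1:ℤ) ((b:ℤ)-3)).image (fun m => (m, (-1:ℤ))))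
            ∪ {(((i:ℕ):ℤ), (0:ℤ))}) : Finset (ℤ×ℤ)) : Set (ℤ×ℤ)) := by
      rw [hcl.frontier_eq, hPH]
      have := boundary_lattice_eq (i:ℤ) (b:ℤ) hiz hbz2 hbz
      simp only [Int.cast_natCast] at this
      exact this
    have hdisj : Disjoint ((Finset.Icc (-1:ℤ) ((b:ℤ)-3)).image (fun m => (m, (-1:ℤ))))
        ({(((i:ℕ):ℤ), (0:ℤ))} : Finset (ℤ×ℤ)) := by
      rw [Finset.disjoint_left]
      rintro p hp hq
      simp only [Finset.mem_image] at hp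
      simp only [Finset.mem_singleton] at hq
      obtain ⟨m, _, rfl⟩ := hp
      have := (Prod.ext_iff.1 hq).2
      omega
    rw [hbd, Set.ncard_image_of_injective _ pairCast_inj, Set.ncard_coe_finset,
      Finset.card_union_of_disjoint hdisj,
      Finset.card_image_of_injective _ (fun m1 m2 h => (Prod.ext_iff.1 h).1), Int.card_Icc,
      Finset.card_singleton]
    omega
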